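/- (Initial decrease.) Let N ≥ 2, λ > 0, ζ > 0, δ > 0, and let f : ℝ → ℝ be continuous with f(ζ) > 0. Let u ∈ C²([0,δ]) satisfy u(0) = ζ, u'(0) = 0, |u'(r)| < 1, and (u'(r)/√(1−u'(r)²))' + ((N−1)/r)·u'(r)/√(1−u'(r)²) + λ·f(u(r)) = 0 for r ∈ (0,δ]. Then u''(0) = −λ f(ζ)/N < 0, and there exists σ ∈ (0,δ] such that u'(r) < 0 and 0 < u(r) < ζ for all r ∈ (0,σ). -/

import Mathlib

open Set Filter Topology

/-- initial decrease: if `f(ζ) > 0` then the solution of the radial IVP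
satisfies `u''(0) = -λ f(ζ)/N < 0`, and `u' < 0`, `0 < u < ζ` just to the right of `0`. -/
theorem initial_decrease
    (N : ℕ) (hN : 2 ≤ N) (lam : ℝ) (hlam : 0 < lam) (ζ : ℝ) (hζ : 0 < ζ)
    (δ : ℝ) (hδ : 0 < δ)
    (f : ℝ → ℝ) (hf : Continuous f) (hfζ : 0 < f ζ)
    (u u' u'' : ℝ → ℝ)
    (hu : ContDiffOn ℝ 2 u (Set.Icc 0 δ))
    (hu' : ∀ r ∈ Set.Icc (0:ℝ) δ, HasDerivWithinAt u (u' r) (Set.Icc 0 δ) r)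
    (hu'' : ∀ r ∈ Set.Icc (0:ℝ) δ, HasDerivWithinAt u' (u'' r) (Set.Icc 0 δ) r)
    (hu0 : u 0 = ζ) (hu'0 : u' 0 = 0)
    (hu'bd : ∀ r ∈ Set.Icc (0:ℝ) δ, |u' r| < 1)
    (hode : ∀ r ∈ Set.Ioc (0:ℝ) δ,
      HasDerivWithinAt (fun s => u' s / Real.sqrt (1 - (u' s) ^ 2))
        (-(((N : ℝ) - 1) / r * (u' r / Real.sqrt (1 - (u' r) ^ 2)) + lam * f (u r)))
        (Set.Icc 0 δ) r) :
    u'' 0 = -lam * f ζ / N ∧ u'' 0 < 0 ∧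
    ∃ σ ∈ Set.Ioc (0:ℝ) δ, ∀ r ∈ Set.Ioo (0:ℝ) σ, u' r < 0 ∧ 0 < u r ∧ u r < ζ := by
  have h0mem : (0:ℝ) ∈ Icc (0:ℝ) δ := ⟨le_refl 0, hδ.le⟩
  have hUD : UniqueDiffOn ℝ (Icc (0:ℝ) δ) := uniqueDiffOn_Icc hδ
  have hNpos : (0:ℝ) < (N:ℝ) := by exact_mod_cast lt_of_lt_of_le (by norm_num) hN
  -- u' agrees with derivWithin u
  have hDeq : ∀ r ∈ Icc (0:ℝ) δ, u' r = derivWithin u (Icc 0 δ) r := fun r hr =>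
    ((hu' r hr).derivWithin (hUD r hr)).symm
  have hu'c1 : ContDiffOn ℝ 1 u' (Icc 0 δ) :=
    (hu.derivWithin hUD (by norm_num)).congr hDeq
  -- u'' is continuous on Icc
  have hu''eq : ∀ r ∈ Icc (0:ℝ) δ, u'' r = derivWithin u' (Icc 0 δ) r := fun r hr =>
    ((hu'' r hr).derivWithin (hUD r hr)).symm
  have hu''c : ContinuousOn u'' (Icc 0 δ) :=
    (hu'c1.continuousOn_derivWithin hUD le_rfl).congr hu''eq
  set w : ℝ → ℝ := fun s => u' s / Real.sqrt (1 - (u' s) ^ 2) with hwdef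
  have hw0 : w 0 = 0 := by simp [hwdef, hu'0]
  have hpos : ∀ r ∈ Icc (0:ℝ) δ, (0:ℝ) < 1 - (u' r) ^ 2 := by
    intro r hr
    have h := hu'bd r hr
    rw [abs_lt] at h
    nlinarith [h.1, h.2]
  have hwC1 : ContDiffOn ℝ 1 w (Icc 0 δ) := by
    apply hu'c1.div
    · exact (contDiffOn_const.sub (hu'c1.pow 2)).sqrt fun r hr => ne_of_gt (hpos r hr)
    · exact fun r hr => ne_of_gt (Real.sqrt_pos.mpr (hpos r hr))
  -- the auxiliary map g and its derivative at 0
  have hg : HasDerivAt (fun t : ℝ => t / Real.sqrt (1 - t ^ 2)) 1 0 := by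
    have h1 : HasDerivAt (fun t : ℝ => 1 - t ^ 2) 0 0 := by
      simpa using ((hasDerivAt_pow 2 (0:ℝ)).const_sub 1)
    have h2 : HasDerivAt (fun t : ℝ => Real.sqrt (1 - t ^ 2)) 0 0 := by
      simpa using h1.sqrt (by norm_num)
    have h3 := (hasDerivAt_id (0:ℝ)).div h2 (by norm_num)
    exact h3.congr_deriv (by simp)
  -- derivative of w at 0 within Icc
  have hw'0 : HasDerivWithinAt w (u'' 0) (Icc 0 δ) 0 := by
    have hg' : HasDerivAt (fun t : ℝ => t / Real.sqrt (1 - t ^ 2)) 1 (u' 0) := by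
      rw [hu'0]; exact hg
    have h := hg'.comp_hasDerivWithinAt 0 (hu'' 0 h0mem)
    exact h.congr_deriv (by simp)
  -- the filter from the right
  have hFne : (𝓝[Ioc (0:ℝ) δ] (0:ℝ)).NeBot := by
    apply mem_closure_iff_nhdsWithin_neBot.mp
    rw [closure_Ioc hδ.ne]
    exact h0mem
  have hle : 𝓝[Ioc (0:ℝ) δ] (0:ℝ) ≤ 𝓝[Icc (0:ℝ) δ] (0:ℝ) :=
    nhdsWithin_mono _ Ioc_subset_Icc_self
  -- slope limit
  have hslope : Tendsto (fun r => w r / r) (𝓝[Ioc (0:ℝ) δ] 0) (𝓝 (u'' 0)) := by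
    have h := hasDerivWithinAt_iff_tendsto_slope.mp hw'0
    have hsub : Ioc (0:ℝ) δ ⊆ Icc (0:ℝ) δ \ {0} := fun r hr =>
      ⟨Ioc_subset_Icc_self hr, ne_of_gt hr.1⟩
    refine (h.mono_left (nhdsWithin_mono _ hsub)).congr' ?_
    filter_upwards [self_mem_nhdsWithin] with r hr
    rw [slope_def_field, hw0, sub_zero, sub_zero]
  -- derivWithin w on Ioc from the ODE
  have hodeEq : ∀ r ∈ Ioc (0:ℝ) δ,
      derivWithin w (Icc 0 δ) r = -(((N : ℝ) - 1) / r * w r + lam * f (u r)) := fun r hr =>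
    (hode r hr).derivWithin (hUD r (Ioc_subset_Icc_self hr))
  have hdw0 : derivWithin w (Icc 0 δ) 0 = u'' 0 := hw'0.derivWithin (hUD 0 h0mem)
  -- limit 1 : via continuity of derivWithin w
  have hT1 : Tendsto (fun r => -(((N : ℝ) - 1) / r * w r + lam * f (u r)))
      (𝓝[Ioc (0:ℝ) δ] 0) (𝓝 (u'' 0)) := by
    have hc : ContinuousOn (derivWithin w (Icc 0 δ)) (Icc 0 δ) :=
      hwC1.continuousOn_derivWithin hUD le_rfl
    have h := (hc 0 h0mem).mono_left hle
    rw [hdw0] at h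
    refine h.congr' ?_
    filter_upwards [self_mem_nhdsWithin] with r hr
    exact hodeEq r hr
  -- limit 2 : termwise
  have hT2 : Tendsto (fun r => -(((N : ℝ) - 1) / r * w r + lam * f (u r)))
      (𝓝[Ioc (0:ℝ) δ] 0) (𝓝 (-(((N : ℝ) - 1) * u'' 0 + lam * f ζ))) := by
    have hA : Tendsto (fun r => ((N : ℝ) - 1) / r * w r) (𝓝[Ioc (0:ℝ) δ] 0)
        (𝓝 (((N : ℝ) - 1) * u'' 0)) := by
      have h := hslope.const_mul ((N : ℝ) - 1)
      refine h.congr' ?_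
      filter_upwards with r
      ring
    have hB : Tendsto (fun r => lam * f (u r)) (𝓝[Ioc (0:ℝ) δ] 0) (𝓝 (lam * f ζ)) := by
      have huc : Tendsto u (𝓝[Ioc (0:ℝ) δ] 0) (𝓝 ζ) := by
        have := (hu.continuousOn 0 h0mem).mono_left hle
        rwa [hu0] at this
      exact ((hf.tendsto ζ).comp huc).const_mul lam
    exact (hA.add hB).neg
  have hkey : u'' 0 = -(((N : ℝ) - 1) * u'' 0 + lam * f ζ) := tendsto_nhds_unique hT1 hT2
  have hval : u'' 0 = -lam * f ζ / N := by
    field_simp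
    linear_combination hkey
  have hneg : u'' 0 < 0 := by
    rw [hval]
    apply div_neg_of_neg_of_pos _ hNpos
    nlinarith
  refine ⟨hval, hneg, ?_⟩
  -- choose σ
  have hev : ∀ᶠ r in 𝓝 (0:ℝ), r ∈ Icc (0:ℝ) δ → u'' r < 0 ∧ 0 < u r := by
    have h1 : u'' ⁻¹' (Iio 0) ∈ 𝓝[Icc (0:ℝ) δ] 0 := (hu''c 0 h0mem) (Iio_mem_nhds hneg)
    have h2 : u ⁻¹' (Ioi 0) ∈ 𝓝[Icc (0:ℝ) δ] 0 := by
      apply (hu.continuousOn 0 h0mem)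
      rw [hu0]
      exact Ioi_mem_nhds hζ
    have h3 := Filter.inter_mem h1 h2
    rw [mem_nhdsWithin_iff_eventually] at h3
    filter_upwards [h3] with r hr hmem
    exact hr hmem
  obtain ⟨ε, hε, hεp⟩ := Metric.eventually_nhds_iff.mp hev
  set σ : ℝ := min (ε / 2) δ with hσdef
  have hσpos : 0 < σ := lt_min (by linarith) hδ
  have hσδ : σ ≤ δ := min_le_right _ _
  have hP : ∀ r ∈ Icc (0:ℝ) σ, u'' r < 0 ∧ 0 < u r := by
    intro r hr
    apply hεp
    · rw [Real.dist_eq, sub_zero, abs_of_nonneg hr.1]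
      have : σ ≤ ε / 2 := min_le_left _ _
      linarith [hr.2]
    · exact ⟨hr.1, hr.2.trans hσδ⟩
  have hsub : Icc (0:ℝ) σ ⊆ Icc (0:ℝ) δ := Icc_subset_Icc le_rfl hσδ
  have hderivAt : ∀ x ∈ Ioo (0:ℝ) σ, HasDerivAt u' (u'' x) x := by
    intro x hx
    have hxδ : x < δ := lt_of_lt_of_le hx.2 hσδ
    exact (hu'' x ⟨hx.1.le, hxδ.le⟩).hasDerivAt (Icc_mem_nhds hx.1 hxδ)
  have hderivuAt : ∀ x ∈ Ioo (0:ℝ) σ, HasDerivAt u (u' x) x := by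
    intro x hx
    have hxδ : x < δ := lt_of_lt_of_le hx.2 hσδ
    exact (hu' x ⟨hx.1.le, hxδ.le⟩).hasDerivAt (Icc_mem_nhds hx.1 hxδ)
  have hanti' : StrictAntiOn u' (Icc 0 σ) := by
    apply strictAntiOn_of_deriv_neg (convex_Icc 0 σ) (hu'c1.continuousOn.mono hsub)
    intro x hx
    rw [interior_Icc] at hx
    rw [(hderivAt x hx).deriv]
    exact (hP x ⟨hx.1.le, hx.2.le⟩).1
  have hu'neg : ∀ r ∈ Ioo (0:ℝ) σ, u' r < 0 := by
    intro r hr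
    have := hanti' ⟨le_rfl, hσpos.le⟩ ⟨hr.1.le, hr.2.le⟩ hr.1
    rwa [hu'0] at this
  have hantiu : StrictAntiOn u (Icc 0 σ) := by
    apply strictAntiOn_of_deriv_neg (convex_Icc 0 σ) (hu.continuousOn.mono hsub)
    intro x hx
    rw [interior_Icc] at hx
    rw [(hderivuAt x hx).deriv]
    exact hu'neg x hx
  refine ⟨σ, ⟨hσpos, hσδ⟩, fun r hr => ⟨hu'neg r hr, (hP r ⟨hr.1.le, hr.2.le⟩).2, ?_⟩⟩
  have := hantiu ⟨le_rfl, hσpos.le⟩ ⟨hr.1.le, hr.2.le⟩ hr.1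
  rwa [hu0] at this
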